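/- For all integers a > b ≥ 0 and all x > 0, one has I_b(x)² − I_a(x) I_{2b-a}(x) > 0; in particular I_b(x)² > I_{b-1}(x) I_{b+1}(x) for b ≥ 1 (log-concavity of j ↦ I_j(x) in the index). -/

import Mathlib

/-- The modified Bessel function of the first kind `I_j(x)`, `j ∈ ℤ`,
defined by its power series (extended to negative indices by `I_{-j} = I_j`). -/
noncomputable def besselI (j : ℤ) (x : ℝ) : ℝ :=
  ∑' s : ℕ, (x / 2) ^ (j.natAbs + 2 * s) /
    ((Nat.factorial s : ℝ) * (Nat.factorial (j.natAbs + s) : ℝ))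

/-- The determinant `f_{k,n}(x) = det (I_{k_j - n_i}(x))_{i,j}`. -/
noncomputable def fdet (l : ℕ) (k n : Fin l → ℤ) (x : ℝ) : ℝ :=
  Matrix.det (fun i j : Fin l => besselI (k j - n i) x)

open Finset


private lemma vandermonde_aux (p q t : ℕ) :
    ∑ ij ∈ antidiagonal t, t.choose ij.1 * (p + q + t).choose (p + ij.1)
      = (p + q + 2 * t).choose (p + t) := by
  have h := Nat.add_choose_eq t (p + q + t) (p + t)
  rw [Finset.Nat.sum_antidiagonal_eq_sum_range_succ_mk] at h
  rw [Finset.Nat.sum_antidiagonal_eq_sum_range_succ_mk]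
  have h2 : ∑ i ∈ range (p + t + 1), t.choose i * (p + q + t).choose (p + t - i)
      = ∑ i ∈ range (t + 1), t.choose i * (p + q + t).choose (p + t - i) := by
    refine (Finset.sum_subset (by intro i hi; simp_all; omega) ?_).symm
    intro i hi hni
    simp only [mem_range] at hi hni
    rw [Nat.choose_eq_zero_of_lt (by omega), zero_mul]
  rw [h2] at h
  have hr := Finset.sum_range_reflect (fun i => t.choose i * (p + q + t).choose (p + t - i)) (t + 1)
  have h3 : ∑ k ∈ range (t + 1), t.choose k * (p + q + t).choose (p + k)
      = ∑ k ∈ range (t + 1), t.choose (t + 1 - 1 - k) * (p + q + t).choose (p + t - (t + 1 - 1 - k)) := by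
    refine Finset.sum_congr rfl fun k hk => ?_
    simp only [mem_range] at hk
    have e1 : t + 1 - 1 - k = t - k := by omega
    have e2 : p + t - (t - k) = p + k := by omega
    rw [e1, e2, Nat.choose_symm (by omega)]
  simp only [mem_range, Nat.succ_eq_add_one]
  calc ∑ k ∈ range (t + 1), t.choose (k, t - k).1 * (p + q + t).choose (p + (k, t - k).1)
      = ∑ k ∈ range (t + 1), t.choose k * (p + q + t).choose (p + k) := rfl
    _ = ∑ k ∈ range (t + 1), t.choose (t + 1 - 1 - k) * (p + q + t).choose (p + t - (t + 1 - 1 - k)) := h3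
    _ = ∑ k ∈ range (t + 1), t.choose k * (p + q + t).choose (p + t - k) := hr
    _ = (p + q + 2 * t).choose (p + t) := by rw [← h]; congr 1; omega

private lemma choose_step (t m : ℕ) (h : t ≤ m) :
    (2 * t).choose (m + 1) ≤ (2 * t).choose m := by
  have h1 := Nat.choose_succ_right_eq (2 * t) m
  have h2 : 2 * t - m ≤ m + 1 := by omega
  have h3 : (2 * t).choose (m + 1) * (m + 1) ≤ (2 * t).choose m * (m + 1) := by
    rw [h1]; exact Nat.mul_le_mul_left _ h2
  exact Nat.le_of_mul_le_mul_right h3 (by omega)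

private lemma choose_anti (t j : ℕ) : ∀ k, (2 * t).choose (t + j + k) ≤ (2 * t).choose (t + j)
  | 0 => le_refl _
  | k + 1 => by
      have h1 : (2 * t).choose (t + j + (k + 1)) ≤ (2 * t).choose (t + j + k) :=
        choose_step t (t + j + k) (by omega)
      exact le_trans h1 (choose_anti t j k)

private lemma choose_le_central (t k : ℕ) : (2 * t).choose (t + k) ≤ (2 * t).choose t := by
  simpa using choose_anti t 0 k

private lemma choose_lt_central (t δ : ℕ) (ht : 1 ≤ t) (hδ : 1 ≤ δ) :
    (2 * t).choose (t + δ) < (2 * t).choose t := by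
  have hc : 0 < (2 * t).choose t := Nat.choose_pos (by omega)
  have hlt : (2 * t).choose (t + 1) < (2 * t).choose t := by
    have h1 := Nat.choose_succ_right_eq (2 * t) t
    have h2 : 2 * t - t = t := by omega
    rw [h2] at h1
    have h3 : (2 * t).choose (t + 1) * (t + 1) < (2 * t).choose t * (t + 1) := by
      rw [h1]; nlinarith
    exact Nat.lt_of_mul_lt_mul_right h3
  calc (2 * t).choose (t + δ) = (2 * t).choose (t + 1 + (δ - 1)) := by congr 1; omega
    _ ≤ (2 * t).choose (t + 1) := choose_anti t 1 (δ - 1)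
    _ < (2 * t).choose t := hlt

private lemma fact_step (n m : ℕ) (h : m < n) :
    (n - m).factorial * (n + m).factorial
      ≤ (n - (m + 1)).factorial * (n + (m + 1)).factorial := by
  have e1 : n - m = (n - (m + 1)) + 1 := by omega
  rw [e1, Nat.factorial_succ, show n + (m + 1) = (n + m) + 1 from rfl, Nat.factorial_succ]
  calc (n - (m + 1) + 1) * (n - (m + 1)).factorial * (n + m).factorial
      = (n - (m + 1)).factorial * ((n - (m + 1) + 1) * (n + m).factorial) := by ring
    _ ≤ (n - (m + 1)).factorial * ((n + m + 1) * (n + m).factorial) :=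
        Nat.mul_le_mul_left _ (Nat.mul_le_mul_right _ (by omega))

private lemma fact_le (n i : ℕ) : ∀ d, i + d ≤ n →
    (n - i).factorial * (n + i).factorial
      ≤ (n - (i + d)).factorial * (n + (i + d)).factorial
  | 0, _ => le_refl _
  | d + 1, h => by
      calc (n - i).factorial * (n + i).factorial
          ≤ (n - (i + d)).factorial * (n + (i + d)).factorial := fact_le n i d (by omega)
        _ ≤ (n - (i + d + 1)).factorial * (n + (i + d + 1)).factorial :=
            fact_step n (i + d) (by omega)
        _ = (n - (i + (d + 1))).factorial * (n + (i + (d + 1))).factorial := by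
            rw [show i + (d + 1) = i + d + 1 from rfl]

/-- coefficient of the Cauchy product of two Bessel series -/
noncomputable def cfn (y : ℝ) (p q t : ℕ) : ℝ :=
  y ^ (p + q + 2 * t) * ((p + q + 2 * t).choose (p + t) : ℝ) /
    ((t.factorial : ℝ) * ((p + q + t).factorial : ℝ))

private lemma summable_abs_term (m : ℕ) (y : ℝ) :
    Summable fun s : ℕ => ‖y ^ (m + 2 * s) / ((s.factorial : ℝ) * ((m + s).factorial : ℝ))‖ := by
  have hg : Summable fun s : ℕ => |y| ^ m * ((y ^ 2) ^ s / (s.factorial : ℝ)) :=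
    (Real.summable_pow_div_factorial (y ^ 2)).mul_left _
  refine Summable.of_nonneg_of_le (fun s => norm_nonneg _) (fun s => ?_) hg
  have hfac : (1 : ℝ) ≤ ((m + s).factorial : ℝ) := by
    exact_mod_cast Nat.one_le_iff_ne_zero.mpr (Nat.factorial_ne_zero _)
  have hs : (0 : ℝ) < (s.factorial : ℝ) := by exact_mod_cast s.factorial_pos
  calc ‖y ^ (m + 2 * s) / ((s.factorial : ℝ) * ((m + s).factorial : ℝ))‖
      = |y| ^ (m + 2 * s) / ((s.factorial : ℝ) * ((m + s).factorial : ℝ)) := by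
        rw [norm_div, norm_pow, Real.norm_eq_abs, Real.norm_eq_abs, abs_mul,
          Nat.abs_cast, Nat.abs_cast]
    _ ≤ |y| ^ (m + 2 * s) / ((s.factorial : ℝ) * 1) :=
        div_le_div_of_nonneg_left (pow_nonneg (abs_nonneg _) _) (by rw [mul_one]; exact hs)
          (by rw [mul_one] at *; nlinarith)
    _ = |y| ^ m * ((y ^ 2) ^ s / (s.factorial : ℝ)) := by
        rw [mul_one, pow_add, pow_mul, sq_abs, mul_div_assoc]

private lemma antidiag_sum (p q t : ℕ) (y : ℝ)
    (hv : ∑ ij ∈ antidiagonal t, t.choose ij.1 * (p + q + t).choose (p + ij.1)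
      = (p + q + 2 * t).choose (p + t)) :
    ∑ ij ∈ antidiagonal t,
      y ^ (p + 2 * ij.1) / ((ij.1.factorial : ℝ) * ((p + ij.1).factorial : ℝ)) *
        (y ^ (q + 2 * ij.2) / ((ij.2.factorial : ℝ) * ((q + ij.2).factorial : ℝ)))
      = cfn y p q t := by
  rw [cfn, ← hv, Nat.cast_sum]
  rw [Finset.mul_sum, Finset.sum_div]
  refine Finset.sum_congr rfl fun ij hij => ?_
  obtain ⟨i, j⟩ := ij
  rw [Finset.HasAntidiagonal.mem_antidiagonal] at hij
  simp only
  have h2 : t.choose i * i.factorial * j.factorial = t.factorial := by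
    have := Nat.choose_mul_factorial_mul_factorial (show i ≤ t by omega)
    rwa [show t - i = j by omega] at this
  have h3 : (p + q + t).choose (p + i) * (p + i).factorial * (q + j).factorial
      = (p + q + t).factorial := by
    have := Nat.choose_mul_factorial_mul_factorial (show p + i ≤ p + q + t by omega)
    rwa [show p + q + t - (p + i) = q + j by omega] at this
  have tkey : t.factorial * (p + q + t).factorial
      = (t.choose i * (p + q + t).choose (p + i)) *
        (i.factorial * (p + i).factorial * (j.factorial * (q + j).factorial)) := by
    rw [← h2, ← h3]; ring
  have Tkey : ((t.factorial : ℝ) * ((p + q + t).factorial : ℝ))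
      = ((t.choose i * (p + q + t).choose (p + i) : ℕ) : ℝ) *
        ((i.factorial : ℝ) * ((p + i).factorial : ℝ) *
          ((j.factorial : ℝ) * ((q + j).factorial : ℝ))) := by
    exact_mod_cast congrArg (Nat.cast : ℕ → ℝ) tkey
  have e1 : p + 2 * i + (q + 2 * j) = p + q + 2 * t := by omega
  have hc : (0 : ℝ) < ((t.choose i * (p + q + t).choose (p + i) : ℕ) : ℝ) := by
    have : 0 < t.choose i * (p + q + t).choose (p + i) :=
      Nat.mul_pos (Nat.choose_pos (by omega)) (Nat.choose_pos (by omega))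
    exact_mod_cast this
  rw [div_mul_div_comm, ← pow_add, e1, Tkey, mul_comm (y ^ (p + q + 2 * t))
    ((t.choose i * (p + q + t).choose (p + i) : ℕ) : ℝ), mul_div_mul_left _ _ hc.ne']

noncomputable def bI (m : ℕ) (y : ℝ) : ℝ :=
  ∑' s : ℕ, y ^ (m + 2 * s) / ((s.factorial : ℝ) * ((m + s).factorial : ℝ))

private lemma summable_cfn (p q : ℕ) (y : ℝ) : Summable (cfn y p q) := by
  have h := (summable_norm_sum_mul_antidiagonal_of_summable_norm
    (summable_abs_term p y) (summable_abs_term q y)).of_norm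
  exact h.congr fun t => antidiag_sum p q t y (vandermonde_aux p q t)

private lemma bI_mul (p q : ℕ) (y : ℝ) : bI p y * bI q y = ∑' t, cfn y p q t := by
  rw [bI, bI, tsum_mul_tsum_eq_tsum_sum_antidiagonal_of_summable_norm
    (summable_abs_term p y) (summable_abs_term q y)]
  exact tsum_congr fun t => antidiag_sum p q t y (vandermonde_aux p q t)

private lemma cfn_nonneg {y : ℝ} (hy : 0 ≤ y) (p q t : ℕ) : 0 ≤ cfn y p q t := by
  rw [cfn]; positivity

private lemma fact_cast_pos (t m : ℕ) : (0 : ℝ) < (t.factorial : ℝ) * ((m).factorial : ℝ) := by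
  have h1 : (0:ℝ) < (t.factorial : ℝ) := by exact_mod_cast t.factorial_pos
  have h2 : (0:ℝ) < ((m).factorial : ℝ) := by exact_mod_cast (m).factorial_pos
  exact mul_pos h1 h2

private lemma cfn_pos {y : ℝ} (hy : 0 < y) (β t : ℕ) : 0 < cfn y β β t := by
  rw [cfn]
  have h1 : 0 < ((β + β + 2 * t).choose (β + t) : ℝ) := by
    exact_mod_cast Nat.choose_pos (by omega)
  exact div_pos (mul_pos (pow_pos hy _) h1) (fact_cast_pos _ _)

private lemma cfn_le_cfn {y : ℝ} (hy : 0 < y) {p q t p' q' t' : ℕ}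
    (hE : p + q + 2 * t = p' + q' + 2 * t')
    (hch : (p + q + 2 * t).choose (p + t) ≤ (p' + q' + 2 * t').choose (p' + t'))
    (hfa : t'.factorial * (p' + q' + t').factorial ≤ t.factorial * (p + q + t).factorial) :
    cfn y p q t ≤ cfn y p' q' t' := by
  rw [cfn, cfn, hE]
  refine div_le_div₀ (by positivity) ?_ (fact_cast_pos _ _) ?_
  · have : ((p + q + 2 * t).choose (p + t) : ℝ) ≤ ((p' + q' + 2 * t').choose (p' + t') : ℝ) := by
      exact_mod_cast hch
    rw [hE] at this
    exact mul_le_mul_of_nonneg_left this (by positivity)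
  · exact_mod_cast hfa

private lemma cfn_lt_cfn {y : ℝ} (hy : 0 < y) {p q t p' q' t' : ℕ}
    (hE : p + q + 2 * t = p' + q' + 2 * t')
    (hch : (p + q + 2 * t).choose (p + t) < (p' + q' + 2 * t').choose (p' + t'))
    (hfa : t'.factorial * (p' + q' + t').factorial ≤ t.factorial * (p + q + t).factorial) :
    cfn y p q t < cfn y p' q' t' := by
  rw [cfn, cfn, hE]
  refine div_lt_div₀ ?_ ?_ (by positivity) (fact_cast_pos _ _)
  · have : ((p + q + 2 * t).choose (p + t) : ℝ) < ((p' + q' + 2 * t').choose (p' + t') : ℝ) := by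
      exact_mod_cast hch
    rw [hE] at this
    exact mul_lt_mul_of_pos_left this (pow_pos hy _)
  · exact_mod_cast hfa

private lemma key_lt (β σ δ : ℕ) (hβσ : β ≤ σ) (hδσ : δ ≤ σ) (hne : β < σ ∨ 1 ≤ δ)
    {y : ℝ} (hy : 0 < y) :
    bI (σ + δ) y * bI (σ - δ) y < bI β y ^ 2 := by
  set e := σ - β with he
  set G : ℕ → ℝ := fun s => if e ≤ s then cfn y (σ + δ) (σ - δ) (s - e) else 0 with hG
  have hGnn : ∀ s, 0 ≤ G s := by
    intro s
    rw [hG]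
    dsimp only
    split
    · exact cfn_nonneg hy.le _ _ _
    · exact le_refl 0
  have hprod : bI (σ + δ) y * bI (σ - δ) y = ∑' s, G s := by
    rw [bI_mul]
    have h1 : ∀ u : ℕ, G (u + e) = cfn y (σ + δ) (σ - δ) u := by
      intro u
      rw [hG]
      dsimp only
      rw [if_pos (Nat.le_add_left e u), Nat.add_sub_cancel]
    have h2 : (∑' u : ℕ, G (u + e)) = ∑' s, G s := by
      refine Function.Injective.tsum_eq (add_left_injective e) ?_
      intro s hs
      rcases le_or_gt e s with h | h
      · exact ⟨s - e, show s - e + e = s by omega⟩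
      · exfalso
        apply hs
        rw [hG]
        dsimp only
        rw [if_neg (by omega)]
    rw [← h2]
    exact tsum_congr fun u => (h1 u).symm
  have hle : ∀ s, G s ≤ cfn y β β s := by
    intro s
    rw [hG]
    dsimp only
    split
    · rename_i h
      set u := s - e with hu
      set t := σ + u with ht
      have hs' : s = u + e := by omega
      have hσ : σ = β + e := by omega
      refine cfn_le_cfn hy (by omega) ?_ ?_
      · have r1 : σ + δ + (σ - δ) + 2 * u = 2 * t := by omega
        have r2 : σ + δ + u = t + δ := by omega
        have r3 : β + β + 2 * s = 2 * t := by omega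
        have r4 : β + s = t := by omega
        rw [r1, r2, r3, r4]
        exact choose_le_central t δ
      · have hfact := fact_le t β (σ - β) (by omega)
        rw [show β + (σ - β) = σ by omega, show t - β = s by omega,
          show t + β = β + β + s by omega, show t - σ = u by omega,
          show t + σ = σ + δ + (σ - δ) + u by omega] at hfact
        exact hfact
    · exact cfn_nonneg hy.le _ _ _
  have hzero : G 0 < cfn y β β 0 := by
    rcases Nat.eq_zero_or_pos e with h0 | h0
    · have hσβ : σ = β := by omega
      have hδ1 : 1 ≤ δ := by
        rcases hne with h | h
        · omega
        · exact h
      have hβ1 : 1 ≤ β := by omega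
      rw [hG]
      dsimp only
      rw [if_pos (by omega)]
      refine cfn_lt_cfn hy (by omega) ?_
        (by rw [show (0:ℕ) - e = 0 by omega, show σ + δ + (σ - δ) + 0 = β + β + 0 by omega])
      have r1 : σ + δ + (σ - δ) + 2 * (0 - e) = 2 * β := by omega
      have r2 : σ + δ + (0 - e) = β + δ := by omega
      have r3 : β + β + 2 * 0 = 2 * β := by omega
      have r4 : β + 0 = β := by omega
      rw [r1, r2, r3, r4]
      exact choose_lt_central β δ hβ1 hδ1
    · rw [hG]
      dsimp only
      rw [if_neg (by omega)]
      exact cfn_pos hy β 0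
  calc bI (σ + δ) y * bI (σ - δ) y = ∑' s, G s := hprod
    _ < ∑' s, cfn y β β s :=
        Summable.tsum_lt_tsum_of_nonneg hGnn hle hzero (summable_cfn β β y)
    _ = bI β y ^ 2 := by rw [sq, bI_mul]

private lemma besselI_eq_bI (j : ℤ) (x : ℝ) : besselI j x = bI j.natAbs (x / 2) := rfl

/-- For integers `a > b ≥ 0` and `x > 0`: `I_b(x)² - I_a(x) I_{2b-a}(x) > 0`; in
particular `I_b(x)² > I_{b-1}(x) I_{b+1}(x)` for `b ≥ 1` (log-concavity in the index). -/
theorem besselI_logConcave (a b : ℤ) (hab : b < a) (hb : 0 ≤ b) (x : ℝ) (hx : 0 < x) :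
    0 < besselI b x ^ 2 - besselI a x * besselI (2 * b - a) x ∧
    (1 ≤ b → besselI (b - 1) x * besselI (b + 1) x < besselI b x ^ 2) := by
  have hy : (0 : ℝ) < x / 2 := by linarith
  have main : ∀ a' b' : ℤ, b' < a' → 0 ≤ b' →
      besselI a' x * besselI (2 * b' - a') x < besselI b' x ^ 2 := by
    intro a' b' hab' hb'
    set β := b'.natAbs with hβ
    set d := a'.natAbs - β with hd
    rw [besselI_eq_bI a', besselI_eq_bI (2 * b' - a'), besselI_eq_bI b', ← hβ]
    rcases le_or_gt a' (2 * b') with h | h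
    · have e1 : a'.natAbs = β + d := by omega
      have e2 : (2 * b' - a').natAbs = β - d := by omega
      rw [e1, e2]
      exact key_lt β β d (le_refl _) (by omega) (Or.inr (by omega)) hy
    · have e1 : a'.natAbs = d + β := by omega
      have e2 : (2 * b' - a').natAbs = d - β := by omega
      rw [e1, e2]
      exact key_lt β d β (by omega) (by omega) (Or.inl (by omega)) hy
  constructor
  · exact sub_pos.mpr (main a b hab hb)
  · intro _
    have h2 : 2 * b - (b + 1) = b - 1 := by ring
    have hm := main (b + 1) b (by omega) hb
    rw [h2] at hm
    calc besselI (b - 1) x * besselI (b + 1) x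
        = besselI (b + 1) x * besselI (b - 1) x := mul_comm _ _
      _ < besselI b x ^ 2 := hm
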